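/- For any integers m ≥ i ≥ 0, the limit as q → -1 of the Gaussian binomial coefficient [2m choose 2i]_q equals the ordinary binomial coefficient C(m, i). -/
import Mathlib


open Finset

/-- A permutation of `Fin n` viewed as a function `ℕ → ℕ` (0-based), identity outside. -/
def pf {n : ℕ} (π : Equiv.Perm (Fin n)) (i : ℕ) : ℕ :=
  if h : i < n then (π ⟨i, h⟩ : ℕ) else i

/-- Number of descents. -/
def desN {n : ℕ} (π : Equiv.Perm (Fin n)) : ℕ :=
  ((range (n - 1)).filter (fun i => pf π (i + 1) < pf π i)).card

/-- Number of inversions. -/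
def invN {n : ℕ} (π : Equiv.Perm (Fin n)) : ℕ :=
  (((range n) ×ˢ (range n)).filter (fun p => p.1 < p.2 ∧ pf π p.2 < pf π p.1)).card

/-- Number of excedances. -/
def excN {n : ℕ} (π : Equiv.Perm (Fin n)) : ℕ :=
  ((range n).filter (fun i => i < pf π i)).card

/-- Major index. -/
def majN {n : ℕ} (π : Equiv.Perm (Fin n)) : ℕ :=
  ∑ i ∈ (range (n - 1)).filter (fun i => pf π (i + 1) < pf π i), (i + 1)

/-- Number of admissible inversions. -/
def aiN {n : ℕ} (π : Equiv.Perm (Fin n)) : ℕ :=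
  (((range n) ×ˢ (range n)).filter (fun p => p.1 < p.2 ∧ pf π p.2 < pf π p.1 ∧
    ((0 < p.1 ∧ pf π (p.1 - 1) < pf π p.1) ∨ ∃ k < p.2, p.1 < k ∧ pf π p.1 < pf π k))).card

/-- The classical Eulerian polynomial `A_n(t) = ∑_{π ∈ S_n} t^{des π}`. -/
def eulerPoly (R : Type*) [CommRing R] (n : ℕ) (t : R) : R :=
  ∑ π : Equiv.Perm (Fin n), t ^ desN π

/-- The (maj, exc) q-Eulerian polynomial `A_n(t,q)`. -/
def Aq (R : Type*) [CommRing R] (n : ℕ) (t q : R) : R :=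
  ∑ π : Equiv.Perm (Fin n), t ^ excN π * q ^ (majN π - excN π)

/-- The Gaussian binomial coefficient (as a value at `q`), via the q-Pascal recurrence. -/
def gaussR {R : Type*} [CommRing R] (q : R) : ℕ → ℕ → R
  | _, 0 => 1
  | 0, _ + 1 => 0
  | n + 1, k + 1 => gaussR q n k + q ^ (k + 1) * gaussR q n (k + 1)

/-- The q-binomial-Eulerian polynomial `Ã_n(t,q)`. -/
def Atilde (R : Type*) [CommRing R] (n : ℕ) (t q : R) : R :=
  1 + t * ∑ m ∈ Icc 1 n, gaussR q n m * Aq R m t q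

/-- Membership in PRW: if the permutation has an ascent, then the first ascent
carries the smallest letter. -/
def isPRW {n : ℕ} (π : Equiv.Perm (Fin n)) : Prop :=
  ∀ i < n, i + 1 < n → pf π i < pf π (i + 1) →
    (∀ j < i, ¬ pf π j < pf π (j + 1)) → pf π i = 0

instance {n : ℕ} : DecidablePred (isPRW (n := n)) := fun _ => by
  unfold isPRW; infer_instance

/-- 1-based entries with boundary convention `σ₀ = σ_{n+1} = +∞` (encoded as `n`). -/
def extv {n : ℕ} (π : Equiv.Perm (Fin n)) (i : ℕ) : ℕ :=
  if 1 ≤ i ∧ i ≤ n then pf π (i - 1) else n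

/-- Number of non-initial double descents. -/
def ddN {n : ℕ} (π : Equiv.Perm (Fin n)) : ℕ :=
  ((Icc 2 n).filter (fun i => extv π (i + 1) < extv π i ∧ extv π i < extv π (i - 1))).card

section aux

variable {R : Type*} [CommRing R]

lemma gaussR_zero_right (q : R) (n : ℕ) : gaussR q n 0 = 1 := by cases n <;> rfl

lemma gaussR_succ_succ (q : R) (n k : ℕ) :
    gaussR q (n + 1) (k + 1) = gaussR q n k + q ^ (k + 1) * gaussR q n (k + 1) := rfl

lemma gaussR_of_lt (q : R) : ∀ n k, n < k → gaussR q n k = 0 := by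
  intro n
  induction n with
  | zero => intro k hk; match k, hk with | k + 1, _ => rfl
  | succ n ih =>
    intro k hk
    match k, hk with
    | k + 1, hk =>
      rw [gaussR_succ_succ, ih k (by omega), ih (k + 1) (by omega)]
      ring

lemma gaussR_diag (q : R) : ∀ n, gaussR q n n = 1 := by
  intro n
  induction n with
  | zero => rfl
  | succ n ih =>
    rw [gaussR_succ_succ, ih, gaussR_of_lt q n (n + 1) (by omega)]
    ring

lemma gaussR_continuous : ∀ n k : ℕ, Continuous fun q : ℝ => gaussR q n k := by
  intro n
  induction n with
  | zero =>
    intro k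
    cases k with
    | zero => exact continuous_const
    | succ k => exact continuous_const
  | succ n ih =>
    intro k
    cases k with
    | zero => exact continuous_const
    | succ k =>
      simp only [gaussR_succ_succ]
      exact (ih k).add ((continuous_pow (k + 1)).mul (ih (k + 1)))

lemma gaussR_prod_identity (q : R) :
    ∀ n k : ℕ, k ≤ n →
      (∏ j ∈ range k, (1 - q ^ (j + 1))) * (∏ j ∈ range (n - k), (1 - q ^ (j + 1))) *
        gaussR q n k = ∏ j ∈ range n, (1 - q ^ (j + 1)) := by
  intro n
  induction n with
  | zero =>
    intro k hk
    interval_cases k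
    simp [gaussR_zero_right]
  | succ n ih =>
    intro k hk
    cases k with
    | zero => simp [gaussR_zero_right]
    | succ k =>
      rcases eq_or_lt_of_le hk with heq | hlt
      · rw [heq, gaussR_diag]
        simp
      · have hk1 : k + 1 ≤ n := by omega
        have h1 := ih k (by omega)
        have h2 := ih (k + 1) hk1
        have e1 : n + 1 - (k + 1) = n - k := by omega
        have e2 : n - k = n - (k + 1) + 1 := by omega
        rw [gaussR_succ_succ, prod_range_succ, e1, e2, prod_range_succ]
        rw [e2, prod_range_succ] at h1
        rw [prod_range_succ] at h2
        have hq : q ^ (k + 1) * q ^ (n - (k + 1) + 1) = q ^ (n + 1) := by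
          rw [← pow_add]; congr 1; omega
        rw [prod_range_succ]
        linear_combination (1 - q ^ (k + 1)) * h1 +
          q ^ (k + 1) * (1 - q ^ (n - (k + 1) + 1)) * h2 -
          (∏ j ∈ range n, (1 - q ^ (j + 1))) * hq

lemma gaussR_neg_one : ∀ n k : ℕ, gaussR (-1 : ℝ) n k =
    if n % 2 = 0 ∧ k % 2 = 1 then 0 else ((n / 2).choose (k / 2) : ℝ) := by
  intro n
  induction n with
  | zero =>
    intro k
    cases k with
    | zero => norm_num [gaussR_zero_right]
    | succ k =>
      by_cases hk : (k + 1) % 2 = 1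
      · simp [gaussR, hk]
      · rw [if_neg (by omega)]
        have : (0 : ℕ).choose ((k + 1) / 2) = 0 :=
          Nat.choose_eq_zero_of_lt (by omega)
        simp [gaussR, this]
  | succ n ih =>
    intro k
    cases k with
    | zero => rw [gaussR_zero_right]; norm_num
    | succ k =>
      rw [gaussR_succ_succ, ih k, ih (k + 1)]
      rcases Nat.even_or_odd n with ⟨a, hn⟩ | ⟨a, hn⟩ <;>
        rcases Nat.even_or_odd k with ⟨b, hk'⟩ | ⟨b, hk'⟩ <;> subst hn <;> subst hk'
      · -- n even, k even
        rw [if_neg (by omega), if_pos (by omega), if_neg (by omega)]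
        have e1 : (a + a) / 2 = a := by omega
        have e2 : (b + b) / 2 = b := by omega
        have e3 : (a + a + 1) / 2 = a := by omega
        have e4 : (b + b + 1) / 2 = b := by omega
        rw [e1, e2, e3, e4]; ring
      · -- n even, k odd
        rw [if_pos (by omega), if_neg (by omega), if_neg (by omega)]
        have e1 : (a + a) / 2 = a := by omega
        have e2 : (2 * b + 1 + 1) / 2 = b + 1 := by omega
        have e3 : (a + a + 1) / 2 = a := by omega
        have hev : Even (2 * b + 1 + 1) := ⟨b + 1, by ring⟩
        rw [e1, e2, e3, hev.neg_one_pow]; ring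
      · -- n odd, k even
        rw [if_neg (by omega), if_neg (by omega), if_pos (by omega)]
        have e1 : (2 * a + 1) / 2 = a := by omega
        have e2 : (b + b) / 2 = b := by omega
        have e3 : (b + b + 1) / 2 = b := by omega
        have hod : Odd (b + b + 1) := ⟨b, by ring⟩
        rw [e1, e2, e3, hod.neg_one_pow]; ring
      · -- n odd, k odd
        rw [if_neg (by omega), if_neg (by omega), if_neg (by omega)]
        have e1 : (2 * a + 1) / 2 = a := by omega
        have e2 : (2 * b + 1) / 2 = b := by omega
        have e3 : (2 * b + 1 + 1) / 2 = b + 1 := by omega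
        have e4 : (2 * a + 1 + 1) / 2 = a + 1 := by omega
        have hev : Even (2 * b + 1 + 1) := ⟨b + 1, by ring⟩
        rw [e1, e2, e3, e4, hev.neg_one_pow, Nat.choose_succ_succ]
        push_cast; ring

lemma prod_one_sub_pow_ne_zero (q : ℝ) (hq1 : q ≠ 1) (hq2 : q ≠ -1) (N : ℕ) :
    (∏ j ∈ range N, (1 - q ^ (j + 1))) ≠ 0 := by
  rw [Finset.prod_ne_zero_iff]
  intro j _
  rw [sub_ne_zero]
  intro heq
  rcases pow_eq_one_iff_cases.mp heq.symm with h | h | h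
  · omega
  · exact hq1 h
  · exact hq2 h.1

end aux

/-- limit as q → -1 of [2m choose 2i]_q (defined as the ratio
`(q;q)_{2m} / ((q;q)_{2i} (q;q)_{2m-2i})`) equals C(m,i). -/
theorem stmt0 (m i : ℕ) (h : i ≤ m) :
    Filter.Tendsto (fun q : ℝ =>
      (∏ j ∈ range (2 * m), (1 - q ^ (j + 1))) /
        ((∏ j ∈ range (2 * i), (1 - q ^ (j + 1))) *
          (∏ j ∈ range (2 * m - 2 * i), (1 - q ^ (j + 1)))))
      (nhdsWithin (-1) {(-1)}ᶜ) (nhds (m.choose i : ℝ))  := by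
  have hcont := (gaussR_continuous (2 * m) (2 * i)).tendsto (-1 : ℝ)
  have hval : gaussR (-1 : ℝ) (2 * m) (2 * i) = (m.choose i : ℝ) := by
    rw [gaussR_neg_one, if_neg (by omega)]
    have e1 : 2 * m / 2 = m := by omega
    have e2 : 2 * i / 2 = i := by omega
    rw [e1, e2]
  rw [← hval]
  refine Filter.Tendsto.congr' ?_ (hcont.mono_left nhdsWithin_le_nhds)
  filter_upwards [nhdsWithin_le_nhds (Iio_mem_nhds (by norm_num : (-1 : ℝ) < 0)),
    self_mem_nhdsWithin] with q hq1 hq2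
  have hqne1 : q ≠ 1 := by intro h; rw [h] at hq1; norm_num at hq1
  have hqne2 : q ≠ -1 := hq2
  have hD1 := prod_one_sub_pow_ne_zero q hqne1 hqne2 (2 * i)
  have hD2 := prod_one_sub_pow_ne_zero q hqne1 hqne2 (2 * m - 2 * i)
  have hid := gaussR_prod_identity q (2 * m) (2 * i) (by omega)
  rw [eq_div_iff (mul_ne_zero hD1 hD2)]
  linear_combination hid
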